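/- Let (Ω, P) be a probability space, let M ≥ 1, t > 0, δ > 0, let C¹ : Fin M → Fin M → ℝ be a fixed cost matrix, and let C² : Ω → (Fin M → Fin M → ℝ) be a random cost matrix whose entries ω ↦ C²(ω) i j are all measurable. If for every pair (i,j) one has P({ω : |C¹ i j − C²(ω) i j| ≥ t}) ≤ δ/M², then P({ω : |L(C¹) − L(C²(ω))| ≥ t}) ≤ δ. -/

import Mathlib

open MeasureTheory

/-- The uniform coupling polytope `Π_M`: matrices with nonnegative entries and
all row sums and column sums equal to `1/M`. -/
def uniformCouplings (M : ℕ) : Set (Fin M → Fin M → ℝ) :=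
  {π | (∀ i j, 0 ≤ π i j) ∧ (∀ i, ∑ j, π i j = 1 / M) ∧ (∀ j, ∑ i, π i j = 1 / M)}

/-- The optimal transport value of a cost matrix `C` over the uniform coupling
polytope (the infimum, which is attained). -/
noncomputable def OTvalue {M : ℕ} (C : Fin M → Fin M → ℝ) : ℝ :=
  sInf {v | ∃ π ∈ uniformCouplings M, v = ∑ i, ∑ j, C i j * π i j}


lemma uc_total {M : ℕ} (hM : 1 ≤ M) {π : Fin M → Fin M → ℝ}
    (hπ : π ∈ uniformCouplings M) : ∑ i, ∑ j, π i j = 1 := by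
  have hM0 : (M:ℝ) ≠ 0 := Nat.cast_ne_zero.mpr (by omega)
  simp [hπ.2.1, Finset.sum_const, hM0]

lemma uc_nonempty {M : ℕ} (hM : 1 ≤ M) :
    (fun _ _ => 1 / (M:ℝ)^2) ∈ uniformCouplings M := by
  have hM0 : (M:ℝ) ≠ 0 := Nat.cast_ne_zero.mpr (by omega)
  refine ⟨fun i j => by positivity, fun i => ?_, fun j => ?_⟩ <;>
    · simp [Finset.sum_const]
      field_simp

lemma uc_entry_le {M : ℕ} {π : Fin M → Fin M → ℝ}
    (hπ : π ∈ uniformCouplings M) (i j : Fin M) : π i j ≤ 1 / M := by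
  calc π i j ≤ ∑ j', π i j' :=
        Finset.single_le_sum (fun k _ => hπ.1 i k) (Finset.mem_univ j)
    _ = 1 / M := hπ.2.1 i

lemma S_bddBelow {M : ℕ} (C : Fin M → Fin M → ℝ) :
    BddBelow {v | ∃ π ∈ uniformCouplings M, v = ∑ i, ∑ j, C i j * π i j} := by
  refine ⟨∑ i, ∑ j, -(|C i j| * (1 / M)), ?_⟩
  rintro v ⟨π, hπ, rfl⟩
  apply Finset.sum_le_sum; intro i _
  apply Finset.sum_le_sum; intro j _
  have h1 : -(|C i j| * (1/M)) ≤ -(|C i j| * π i j) := by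
    have := uc_entry_le hπ i j
    nlinarith [abs_nonneg (C i j), hπ.1 i j]
  have h2 : -(|C i j| * π i j) ≤ C i j * π i j := by
    nlinarith [neg_abs_le (C i j), hπ.1 i j]
  linarith

lemma OT_le {M : ℕ} (hM : 1 ≤ M) {e : ℝ} (C1 C2 : Fin M → Fin M → ℝ)
    (h : ∀ i j, |C1 i j - C2 i j| ≤ e) : OTvalue C1 ≤ OTvalue C2 + e := by
  have hne : {v | ∃ π ∈ uniformCouplings M, v = ∑ i, ∑ j, C2 i j * π i j}.Nonempty :=
    ⟨_, _, uc_nonempty hM, rfl⟩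
  have : OTvalue C1 - e ≤ OTvalue C2 := by
    refine le_csInf hne ?_
    rintro v ⟨π, hπ, rfl⟩
    have hmem : (∑ i, ∑ j, C1 i j * π i j) ∈
        {v | ∃ π ∈ uniformCouplings M, v = ∑ i, ∑ j, C1 i j * π i j} := ⟨π, hπ, rfl⟩
    have h1 : OTvalue C1 ≤ ∑ i, ∑ j, C1 i j * π i j := csInf_le (S_bddBelow C1) hmem
    have h2 : ∑ i, ∑ j, C1 i j * π i j ≤ (∑ i, ∑ j, C2 i j * π i j) + e := by
      have : ∑ i, ∑ j, C1 i j * π i j - ∑ i, ∑ j, C2 i j * π i j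
          = ∑ i, ∑ j, (C1 i j - C2 i j) * π i j := by
        rw [← Finset.sum_sub_distrib]
        congr 1; ext i
        rw [← Finset.sum_sub_distrib]
        congr 1; ext j; ring
      have hle : ∑ i, ∑ j, (C1 i j - C2 i j) * π i j ≤ ∑ i, ∑ j, e * π i j := by
        apply Finset.sum_le_sum; intro i _
        apply Finset.sum_le_sum; intro j _
        have := hπ.1 i j
        have := (abs_le.mp (h i j)).2
        nlinarith
      have htot : ∑ i, ∑ j, e * π i j = e := by
        simp_rw [← Finset.mul_sum]
        rw [uc_total hM hπ, mul_one]
      linarith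
    linarith
  linarith

lemma OT_abs_le {M : ℕ} (hM : 1 ≤ M) {e : ℝ} (C1 C2 : Fin M → Fin M → ℝ)
    (h : ∀ i j, |C1 i j - C2 i j| ≤ e) : |OTvalue C1 - OTvalue C2| ≤ e := by
  rw [abs_sub_le_iff]
  constructor
  · have := OT_le hM C1 C2 h; linarith
  · have := OT_le hM C2 C1 (fun i j => by rw [abs_sub_comm]; exact h i j); linarith

theorem prob_OT_value_diff_ge_le_of_entrywise
    {Ω : Type*} [MeasurableSpace Ω] (P : Measure Ω) [IsProbabilityMeasure P]
    {M : ℕ} (hM : 1 ≤ M) {t δ : ℝ} (ht : 0 < t) (hδ : 0 < δ)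
    (C1 : Fin M → Fin M → ℝ) (C2 : Ω → Fin M → Fin M → ℝ)
    (hmeas : ∀ i j, Measurable (fun ω => C2 ω i j))
    (hentry : ∀ i j, P {ω | t ≤ |C1 i j - C2 ω i j|} ≤ ENNReal.ofReal (δ / M ^ 2)) :
    P {ω | t ≤ |OTvalue C1 - OTvalue (C2 ω)|} ≤ ENNReal.ofReal δ := by
  have hM0 : (M:ℝ) ≠ 0 := Nat.cast_ne_zero.mpr (by omega)
  have hNE : Nonempty (Fin M) := ⟨⟨0, by omega⟩⟩
  have hsub : {ω | t ≤ |OTvalue C1 - OTvalue (C2 ω)|} ⊆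
      ⋃ i, ⋃ j, {ω | t ≤ |C1 i j - C2 ω i j|} := by
    intro ω hω
    by_contra hc
    simp only [Set.mem_iUnion, not_exists, Set.mem_setOf_eq, not_le] at hc
    have hne : (Finset.univ : Finset (Fin M × Fin M)).Nonempty := Finset.univ_nonempty
    set e := Finset.univ.sup' hne (fun p : Fin M × Fin M => |C1 p.1 p.2 - C2 ω p.1 p.2|)
      with he_def
    have he : ∀ i j, |C1 i j - C2 ω i j| ≤ e := fun i j =>
      Finset.le_sup' (fun p : Fin M × Fin M => |C1 p.1 p.2 - C2 ω p.1 p.2|)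
        (Finset.mem_univ (i, j))
    have hel : e < t := (Finset.sup'_lt_iff hne).mpr fun p _ => hc p.1 p.2
    have hkey := OT_abs_le hM C1 (C2 ω) he
    have : t ≤ |OTvalue C1 - OTvalue (C2 ω)| := hω
    linarith
  have h1 : P {ω | t ≤ |OTvalue C1 - OTvalue (C2 ω)|}
      ≤ ∑ i, ∑ j, P {ω | t ≤ |C1 i j - C2 ω i j|} := by
    refine (measure_mono hsub).trans ?_
    refine (measure_iUnion_fintype_le _ _).trans ?_
    exact Finset.sum_le_sum fun i _ => measure_iUnion_fintype_le _ _
  refine h1.trans ?_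
  calc ∑ i, ∑ j, P {ω | t ≤ |C1 i j - C2 ω i j|}
      ≤ ∑ _i : Fin M, ∑ _j : Fin M, ENNReal.ofReal (δ / M ^ 2) :=
        Finset.sum_le_sum fun i _ => Finset.sum_le_sum fun j _ => hentry i j
    _ = (M * M : ℕ) * ENNReal.ofReal (δ / M ^ 2) := by
        simp [Finset.sum_const, mul_assoc]
    _ = ENNReal.ofReal δ := by
        rw [← ENNReal.ofReal_natCast, ← ENNReal.ofReal_mul (by positivity)]
        congr 1
        push_cast
        field_simp
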